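/- The function f(z) = (x₁x₂⋯x₇ − 1) − Σ_{j=1}^7 ( (∏_{i∈{0,…,7}, i≠0, i≠j} x_i) − 1 )·e_j satisfies the left octonionic Cauchy–Riemann equation D f = 0 on O, and z* = 1 + e₁ + e₂ + ⋯ + e₇ is a zero of f. -/

import Mathlib

noncomputable section

/-- Octonions as the Cayley–Dickson double of the quaternions. -/
abbrev O := Quaternion ℝ × Quaternion ℝ

/-- Cayley–Dickson multiplication. -/
def omul (x y : O) : O := (x.1 * y.1 - y.2 * star x.2, star x.1 * y.2 + y.1 * x.2)

/-- Octonionic conjugation. -/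
def oconj (x : O) : O := (star x.1, -x.2)

/-- The unit 1 = (1,0). -/
def oone : O := (1, 0)

/-- Euclidean norm. -/
def onorm (x : O) : ℝ := Real.sqrt (‖x.1‖^2 + ‖x.2‖^2)

def qi : Quaternion ℝ := ⟨0,1,0,0⟩
def qj : Quaternion ℝ := ⟨0,0,1,0⟩

/-- The standard octonion basis 1, e₁, …, e₇ with e₁ = (i,0), e₂ = (j,0), e₃ = (0,1),
    e₄ = e₁e₂, e₅ = e₁e₃, e₆ = e₂e₃, e₇ = (e₁e₂)e₃. -/
def basis8 : Fin 8 → O := ![oone, (qi,0), (qj,0), ((0:Quaternion ℝ),1),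
  omul (qi,0) (qj,0), omul (qi,0) (0,1), omul (qj,0) (0,1), omul (omul (qi,0) (qj,0)) (0,1)]

/-- The real coordinates x₀,…,x₇ of z = x₀ + Σ xᵢeᵢ with respect to `basis8`. -/
def coord : Fin 8 → O → ℝ :=
  ![fun z => z.1.re, fun z => z.1.imI, fun z => z.1.imJ, fun z => z.2.re,
    fun z => z.1.imK, fun z => -z.2.imI, fun z => -z.2.imJ, fun z => -z.2.imK]

/-- Left octonionic Cauchy–Riemann operator D f = ∂f/∂x₀ + Σᵢ eᵢ·(∂f/∂xᵢ). -/
def Dleft (f : O → O) (z : O) : O :=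
  fderiv ℝ f z (basis8 0) + ∑ i : Fin 7, omul (basis8 i.succ) (fderiv ℝ f z (basis8 i.succ))

/-- Right octonionic Cauchy–Riemann operator f D = ∂f/∂x₀ + Σᵢ (∂f/∂xᵢ)·eᵢ. -/
def Dright (f : O → O) (z : O) : O :=
  fderiv ℝ f z (basis8 0) + ∑ i : Fin 7, omul (fderiv ℝ f z (basis8 i.succ)) (basis8 i.succ)

/-- Fueter polynomials Zᵢ(z) = xᵢ − x₀eᵢ. -/
def Zp (i : Fin 8) (z : O) : O := coord i z • oone - coord 0 z • basis8 i
/-- Hempfling's function f(z) = (x₁⋯x₇ − 1) − Σⱼ (x₀⋯x̂ⱼ⋯x₇ − 1)eⱼ. -/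
def hempfling (z : O) : O :=
  ((∏ i : Fin 7, coord i.succ z) - 1) • oone
    - ∑ j : Fin 7, ((∏ i ∈ Finset.univ.erase (j.succ : Fin 8), coord i z) - 1) • basis8 j.succ


open Finset

@[simp] lemma coord0 (z : O) : coord 0 z = z.1.re := rfl
@[simp] lemma coord1 (z : O) : coord 1 z = z.1.imI := rfl
@[simp] lemma coord2 (z : O) : coord 2 z = z.1.imJ := rfl
@[simp] lemma coord3 (z : O) : coord 3 z = z.2.re := rfl
@[simp] lemma coord4 (z : O) : coord 4 z = z.1.imK := rfl
@[simp] lemma coord5 (z : O) : coord 5 z = -z.2.imI := rfl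
@[simp] lemma coord6 (z : O) : coord 6 z = -z.2.imJ := rfl
@[simp] lemma coord7 (z : O) : coord 7 z = -z.2.imK := rfl

def coordl (i : Fin 8) : O →ₗ[ℝ] ℝ where
  toFun := coord i
  map_add' a b := by fin_cases i <;> simp <;> ring
  map_smul' r a := by fin_cases i <;> simp [smul_eq_mul]

def coordL (i : Fin 8) : O →L[ℝ] ℝ := (coordl i).toContinuousLinearMap

@[simp] lemma coordL_apply (i : Fin 8) (z : O) : coordL i z = coord i z := rfl

lemma omul_smul_right (r : ℝ) (a b : O) : omul a (r • b) = r • omul a b := by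
  simp [omul, Prod.ext_iff, mul_smul_comm, smul_mul_assoc, smul_sub, smul_add]

lemma omul_sub_right (a b c : O) : omul a (b - c) = omul a b - omul a c := by
  simp only [omul, Prod.ext_iff, Prod.fst_sub, Prod.snd_sub, mul_sub, sub_mul]
  constructor <;> abel

lemma omul_sum_right {ι : Type*} (s : Finset ι) (a : O) (f : ι → O) :
    omul a (∑ i ∈ s, f i) = ∑ i ∈ s, omul a (f i) := by
  classical
  induction s using Finset.induction with
  | empty => simp [omul, Prod.ext_iff]
  | insert _ _ h ih =>
      rw [Finset.sum_insert h, Finset.sum_insert h, ← ih]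
      simp only [omul, Prod.ext_iff, Prod.fst_add, Prod.snd_add, mul_add, add_mul]
      constructor <;> abel

lemma omul_oone (a : O) : omul a oone = a := by
  simp [omul, oone, Prod.ext_iff]

lemma qi_parts : qi.re = 0 ∧ qi.imI = 1 ∧ qi.imJ = 0 ∧ qi.imK = 0 := ⟨rfl, rfl, rfl, rfl⟩
lemma qj_parts : qj.re = 0 ∧ qj.imI = 0 ∧ qj.imJ = 1 ∧ qj.imK = 0 := ⟨rfl, rfl, rfl, rfl⟩

@[simp] lemma basis8_0 : basis8 0 = ((⟨1,0,0,0⟩ : Quaternion ℝ), ⟨0,0,0,0⟩) := by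
  show oone = _
  ext <;> simp [oone] <;> rfl
@[simp] lemma basis8_1 : basis8 1 = ((⟨0,1,0,0⟩ : Quaternion ℝ), ⟨0,0,0,0⟩) := by
  show (qi, (0:Quaternion ℝ)) = _
  ext <;> simp [qi_parts] <;> rfl
@[simp] lemma basis8_2 : basis8 2 = ((⟨0,0,1,0⟩ : Quaternion ℝ), ⟨0,0,0,0⟩) := by
  show (qj, (0:Quaternion ℝ)) = _
  ext <;> simp [qj_parts] <;> rfl
@[simp] lemma basis8_3 : basis8 3 = ((⟨0,0,0,0⟩ : Quaternion ℝ), ⟨1,0,0,0⟩) := by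
  show ((0:Quaternion ℝ), (1:Quaternion ℝ)) = _
  ext <;> simp <;> rfl
@[simp] lemma basis8_4 : basis8 4 = ((⟨0,0,0,1⟩ : Quaternion ℝ), ⟨0,0,0,0⟩) := by
  show omul (qi,0) (qj,0) = _
  ext <;> simp [omul, qi_parts, qj_parts, Quaternion.re_mul, Quaternion.imI_mul, Quaternion.imJ_mul, Quaternion.imK_mul] <;> rfl
@[simp] lemma basis8_5 : basis8 5 = ((⟨0,0,0,0⟩ : Quaternion ℝ), ⟨0,-1,0,0⟩) := by
  show omul (qi,0) (0,1) = _
  ext <;> simp [omul, qi_parts] <;> rfl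
@[simp] lemma basis8_6 : basis8 6 = ((⟨0,0,0,0⟩ : Quaternion ℝ), ⟨0,0,-1,0⟩) := by
  show omul (qj,0) (0,1) = _
  ext <;> simp [omul, qj_parts] <;> rfl
@[simp] lemma basis8_7 : basis8 7 = ((⟨0,0,0,0⟩ : Quaternion ℝ), ⟨0,0,0,-1⟩) := by
  show omul (omul (qi,0) (qj,0)) (0,1) = _
  ext <;> simp [omul, qi_parts, qj_parts, Quaternion.re_mul, Quaternion.imI_mul, Quaternion.imJ_mul, Quaternion.imK_mul] <;> rfl

@[simp] lemma finmk0 (h : 0 < 8) : (⟨0, h⟩ : Fin 8) = 0 := rfl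
@[simp] lemma finmk1 (h : 1 < 8) : (⟨1, h⟩ : Fin 8) = 1 := rfl
@[simp] lemma finmk2 (h : 2 < 8) : (⟨2, h⟩ : Fin 8) = 2 := rfl
@[simp] lemma finmk3 (h : 3 < 8) : (⟨3, h⟩ : Fin 8) = 3 := rfl
@[simp] lemma finmk4 (h : 4 < 8) : (⟨4, h⟩ : Fin 8) = 4 := rfl
@[simp] lemma finmk5 (h : 5 < 8) : (⟨5, h⟩ : Fin 8) = 5 := rfl
@[simp] lemma finmk6 (h : 6 < 8) : (⟨6, h⟩ : Fin 8) = 6 := rfl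
@[simp] lemma finmk7 (h : 7 < 8) : (⟨7, h⟩ : Fin 8) = 7 := rfl

lemma coord_basis (i k : Fin 8) : coord i (basis8 k) = if i = k then 1 else 0 := by
  fin_cases i <;> fin_cases k <;> simp only [finmk0, finmk1, finmk2, finmk3, finmk4, finmk5, finmk6, finmk7,
    coord0, coord1, coord2, coord3, coord4, coord5, coord6, coord7] <;> norm_num <;> decide

@[simp] lemma succn0 : Fin.succ (0 : Fin 7) = 1 := rfl
@[simp] lemma succn1 : Fin.succ (1 : Fin 7) = 2 := rfl
@[simp] lemma succn2 : Fin.succ (2 : Fin 7) = 3 := rfl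
@[simp] lemma succn3 : Fin.succ (3 : Fin 7) = 4 := rfl
@[simp] lemma succn4 : Fin.succ (4 : Fin 7) = 5 := rfl
@[simp] lemma succn5 : Fin.succ (5 : Fin 7) = 6 := rfl
@[simp] lemma succn6 : Fin.succ (6 : Fin 7) = 7 := rfl
@[simp] lemma succmk0 (h : 0 < 7) : Fin.succ (⟨0, h⟩ : Fin 7) = 1 := rfl
@[simp] lemma succmk1 (h : 1 < 7) : Fin.succ (⟨1, h⟩ : Fin 7) = 2 := rfl
@[simp] lemma succmk2 (h : 2 < 7) : Fin.succ (⟨2, h⟩ : Fin 7) = 3 := rfl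
@[simp] lemma succmk3 (h : 3 < 7) : Fin.succ (⟨3, h⟩ : Fin 7) = 4 := rfl
@[simp] lemma succmk4 (h : 4 < 7) : Fin.succ (⟨4, h⟩ : Fin 7) = 5 := rfl
@[simp] lemma succmk5 (h : 5 < 7) : Fin.succ (⟨5, h⟩ : Fin 7) = 6 := rfl
@[simp] lemma succmk6 (h : 6 < 7) : Fin.succ (⟨6, h⟩ : Fin 7) = 7 := rfl

lemma imag_anticomm (p q r s t u v p' q' r' s' t' u' v' : ℝ)
    (horth : p*p' + q*q' + r*r' + s*s' + t*t' + u*u' + v*v' = 0) :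
    omul ((⟨0,p,q,r⟩ : Quaternion ℝ), (⟨s,t,u,v⟩ : Quaternion ℝ))
         ((⟨0,p',q',r'⟩ : Quaternion ℝ), (⟨s',t',u',v'⟩ : Quaternion ℝ))
      = - omul ((⟨0,p',q',r'⟩ : Quaternion ℝ), (⟨s',t',u',v'⟩ : Quaternion ℝ))
               ((⟨0,p,q,r⟩ : Quaternion ℝ), (⟨s,t,u,v⟩ : Quaternion ℝ)) := by
  set A : Quaternion ℝ := ⟨0,p,q,r⟩ with hA
  set B : Quaternion ℝ := ⟨s,t,u,v⟩ with hB
  set C : Quaternion ℝ := ⟨0,p',q',r'⟩ with hC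
  set D : Quaternion ℝ := ⟨s',t',u',v'⟩ with hD
  have hA' : A.re = 0 ∧ A.imI = p ∧ A.imJ = q ∧ A.imK = r := ⟨rfl, rfl, rfl, rfl⟩
  have hB' : B.re = s ∧ B.imI = t ∧ B.imJ = u ∧ B.imK = v := ⟨rfl, rfl, rfl, rfl⟩
  have hC' : C.re = 0 ∧ C.imI = p' ∧ C.imJ = q' ∧ C.imK = r' := ⟨rfl, rfl, rfl, rfl⟩
  have hD' : D.re = s' ∧ D.imI = t' ∧ D.imJ = u' ∧ D.imK = v' := ⟨rfl, rfl, rfl, rfl⟩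
  ext <;> simp [omul, hA', hB', hC', hD', Quaternion.re_mul,
    Quaternion.imI_mul, Quaternion.imJ_mul, Quaternion.imK_mul] <;> linarith [horth]

lemma omul_basis_antisymm (m j : Fin 7) (h : m ≠ j) :
    omul (basis8 m.succ) (basis8 j.succ) = - omul (basis8 j.succ) (basis8 m.succ) := by
  fin_cases m <;> fin_cases j <;>
    first
      | exact absurd rfl h
      | (simp only [succmk0, succmk1, succmk2, succmk3, succmk4, succmk5, succmk6,
          basis8_1, basis8_2, basis8_3, basis8_4, basis8_5, basis8_6, basis8_7]
         exact imag_anticomm _ _ _ _ _ _ _ _ _ _ _ _ _ _ (by norm_num))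

def Dmap (z : O) : O →L[ℝ] O :=
  ((∑ i : Fin 7, (∏ j ∈ Finset.univ.erase i, coord j.succ z) • coordL i.succ).smulRight oone)
    - ∑ j : Fin 7, ((∑ i ∈ Finset.univ.erase (j.succ : Fin 8),
        (∏ k ∈ (Finset.univ.erase (j.succ : Fin 8)).erase i, coord k z) • coordL i).smulRight
        (basis8 j.succ))

lemma coord_hasFDerivAt (i : Fin 8) (z : O) : HasFDerivAt (coord i) (coordL i) z :=
  (coordL i).hasFDerivAt

lemma hempfling_hasFDerivAt (z : O) : HasFDerivAt hempfling (Dmap z) z := by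
  have hP : HasFDerivAt (fun w => ∏ i : Fin 7, coord i.succ w)
      (∑ i : Fin 7, (∏ j ∈ Finset.univ.erase i, coord j.succ z) • coordL i.succ) z :=
    HasFDerivAt.finset_prod (fun i _ => coord_hasFDerivAt i.succ z)
  have hQ : ∀ j : Fin 7, HasFDerivAt (fun w => ∏ i ∈ Finset.univ.erase (j.succ : Fin 8), coord i w)
      (∑ i ∈ Finset.univ.erase (j.succ : Fin 8),
        (∏ k ∈ (Finset.univ.erase (j.succ : Fin 8)).erase i, coord k z) • coordL i) z :=
    fun j => HasFDerivAt.finset_prod (fun i _ => coord_hasFDerivAt i z)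
  have h1 := (hP.sub_const 1).smul_const oone
  have h2 := HasFDerivAt.sum (u := Finset.univ)
    (fun (j : Fin 7) _ => ((hQ j).sub_const 1).smul_const (basis8 j.succ))
  exact h1.sub h2

lemma succ_image_erase (m : Fin 7) :
    (Finset.univ.erase m).image Fin.succ = (Finset.univ.erase (m.succ : Fin 8)).erase 0 := by
  ext i
  simp only [Finset.mem_image, Finset.mem_erase, Finset.mem_univ, and_true, ne_eq]
  rcases Fin.eq_zero_or_eq_succ i with rfl | ⟨k, rfl⟩
  · simp [Fin.succ_ne_zero]
  · constructor
    · rintro ⟨j, hj, hj2⟩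
      rw [← hj2]
      exact ⟨Fin.succ_ne_zero j, fun hc => hj (Fin.succ_inj.mp hc)⟩
    · rintro ⟨-, hk⟩
      exact ⟨k, fun hc => hk (by rw [hc]), rfl⟩

lemma reindex (m : Fin 7) (z : O) :
    (∏ j ∈ Finset.univ.erase m, coord j.succ z)
      = ∏ k ∈ (Finset.univ.erase (m.succ : Fin 8)).erase 0, coord k z := by
  rw [← succ_image_erase, Finset.prod_image]
  intro a _ b _ h
  exact Fin.succ_inj.mp h

lemma Dmap_apply0 (z : O) : Dmap z (basis8 0) =
    - ∑ j : Fin 7, (∏ k ∈ ((Finset.univ.erase (j.succ : Fin 8)).erase 0), coord k z)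
        • basis8 j.succ := by
  simp only [Dmap, ContinuousLinearMap.sub_apply, ContinuousLinearMap.smulRight_apply,
    ContinuousLinearMap.sum_apply, ContinuousLinearMap.smul_apply, coordL_apply, coord_basis,
    smul_eq_mul]
  simp_rw [mul_ite, mul_one, mul_zero, Finset.sum_ite_eq']
  simp [Fin.succ_ne_zero, Finset.mem_erase,
    show ∀ x : Fin 7, (0:Fin 8) ≠ x.succ from fun x => (Fin.succ_ne_zero x).symm]

lemma Dmap_applyS (z : O) (m : Fin 7) : Dmap z (basis8 m.succ) =
    (∏ j ∈ Finset.univ.erase m, coord j.succ z) • oone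
      - ∑ j : Fin 7, (if m = j then 0 else
          ∏ k ∈ (Finset.univ.erase (j.succ : Fin 8)).erase m.succ, coord k z)
            • basis8 j.succ := by
  simp only [Dmap, ContinuousLinearMap.sub_apply, ContinuousLinearMap.smulRight_apply,
    ContinuousLinearMap.sum_apply, ContinuousLinearMap.smul_apply, coordL_apply, coord_basis,
    smul_eq_mul]
  simp_rw [mul_ite, mul_one, mul_zero, Fin.succ_inj, Finset.sum_ite_eq']
  simp only [Finset.mem_univ, if_true, Finset.mem_erase, and_true, ne_eq, Fin.succ_inj,
    ite_not]

lemma Dleft_hempfling (z : O) : Dleft hempfling z = 0 := by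
  have hf : fderiv ℝ hempfling z = Dmap z := (hempfling_hasFDerivAt z).fderiv
  set f : Fin 7 → Fin 7 → O := fun m j =>
    (if m = j then 0 else
      ∏ k ∈ (Finset.univ.erase (j.succ : Fin 8)).erase m.succ, coord k z)
        • omul (basis8 m.succ) (basis8 j.succ) with hfdef
  have hanti : ∀ m j, f m j = - f j m := by
    intro m j
    by_cases h : m = j
    · subst h; simp [hfdef]
    · simp only [hfdef, if_neg h, if_neg (Ne.symm h)]
      rw [Finset.erase_right_comm, omul_basis_antisymm m j h, smul_neg]
  have hS : ∑ m : Fin 7, ∑ j : Fin 7, f m j = 0 := by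
    have h1 : ∑ m : Fin 7, ∑ j : Fin 7, f m j = - ∑ m : Fin 7, ∑ j : Fin 7, f m j := by
      conv_lhs => rw [Finset.sum_comm]
      rw [show (∑ j : Fin 7, ∑ m : Fin 7, f m j) = ∑ j : Fin 7, ∑ m : Fin 7, - f j m from
        Finset.sum_congr rfl fun j _ => Finset.sum_congr rfl fun m _ => hanti m j]
      simp
    have h2 : (2:ℝ) • (∑ m : Fin 7, ∑ j : Fin 7, f m j) = 0 := by
      rw [two_smul]
      nth_rewrite 1 [h1]
      simp
    exact (smul_eq_zero.mp h2).resolve_left (by norm_num)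
  rw [Dleft, hf, Dmap_apply0]
  have hm : ∀ m : Fin 7, omul (basis8 m.succ) (Dmap z (basis8 m.succ)) =
      (∏ k ∈ (Finset.univ.erase (m.succ : Fin 8)).erase 0, coord k z) • basis8 m.succ
        - ∑ j : Fin 7, f m j := by
    intro m
    rw [Dmap_applyS, omul_sub_right, omul_sum_right, omul_smul_right, omul_oone, reindex]
    congr 1
    refine Finset.sum_congr rfl fun j _ => ?_
    rw [omul_smul_right, hfdef]
  calc -∑ j : Fin 7, (∏ k ∈ ((Finset.univ.erase (j.succ : Fin 8)).erase 0), coord k z)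
          • basis8 j.succ
        + ∑ m : Fin 7, omul (basis8 m.succ) (Dmap z (basis8 m.succ))
      = -∑ j : Fin 7, (∏ k ∈ ((Finset.univ.erase (j.succ : Fin 8)).erase 0), coord k z)
          • basis8 j.succ
        + (∑ m : Fin 7, (∏ k ∈ ((Finset.univ.erase (m.succ : Fin 8)).erase 0), coord k z)
            • basis8 m.succ - ∑ m : Fin 7, ∑ j : Fin 7, f m j) := by
        rw [← Finset.sum_sub_distrib]
        congr 1
        exact Finset.sum_congr rfl fun m _ => hm m
    _ = 0 := by rw [hS]; abel

lemma zstar_coord : ∀ i : Fin 8, coord i (oone + ∑ j : Fin 7, basis8 j.succ) = 1 := by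
  intro i
  have hz : (oone + ∑ j : Fin 7, basis8 j.succ : O)
      = ((⟨1,1,1,1⟩ : Quaternion ℝ), (⟨1,-1,-1,-1⟩ : Quaternion ℝ)) := by
    have ho : oone.1.re = 1 ∧ oone.1.imI = 0 ∧ oone.1.imJ = 0 ∧ oone.1.imK = 0 ∧
        oone.2.re = 0 ∧ oone.2.imI = 0 ∧ oone.2.imJ = 0 ∧ oone.2.imK = 0 :=
      ⟨rfl, rfl, rfl, rfl, rfl, rfl, rfl, rfl⟩
    rw [Fin.sum_univ_seven]
    ext <;> simp only [Prod.fst_add, Prod.snd_add, Quaternion.re_add, Quaternion.imI_add,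
      Quaternion.imJ_add, Quaternion.imK_add] <;> simp [ho] <;> norm_num
  fin_cases i <;> simp only [finmk0, finmk1, finmk2, finmk3, finmk4, finmk5, finmk6, finmk7,
    coord0, coord1, coord2, coord3, coord4, coord5, coord6, coord7] <;> rw [hz] <;> norm_num


/-- Hempfling's function is left octonion-monogenic and vanishes at z* = 1 + e₁ + ⋯ + e₇. -/
theorem hempfling_monogenic_and_zero :
    (∀ z : O, Dleft hempfling z = 0) ∧
    hempfling (oone + ∑ j : Fin 7, basis8 j.succ) = 0 := by
  refine ⟨Dleft_hempfling, ?_⟩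
  rw [hempfling]
  rw [Finset.prod_congr rfl fun i _ => zstar_coord i.succ]
  simp only [Finset.prod_const_one, sub_self, zero_smul, zero_sub]
  have h0 : ∀ j : Fin 7,
      ((∏ i ∈ Finset.univ.erase (j.succ : Fin 8),
        coord i (oone + ∑ j : Fin 7, basis8 j.succ)) - 1) • basis8 j.succ = 0 := fun j => by
    rw [Finset.prod_congr rfl fun i _ => zstar_coord i, Finset.prod_const_one, sub_self,
      zero_smul]
  rw [Finset.sum_congr rfl fun j _ => h0 j]
  simp
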